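/- Let g : ℝ^d → ℝ be sublinear, let ‖·‖ be an absolute norm on ℝ^m with dual norm ‖·‖_*, let σ ∈ ℝ^d, Σ_1, …, Σ_m ∈ ℝ^d and b ∈ ℝ^m. Define s ∈ ℝ^m by s_j = max{g(Σ_j) + b_j, g(−Σ_j) − b_j} for j = 1, …, m. If g(σ) + ‖s‖_* ≤ 1, then for every ζ ∈ ℝ^m with ‖ζ‖ ≤ 1 one has g(σ + ∑_{j=1}^m ζ_j Σ_j) ≤ 1 − ⟨b, ζ⟩. -/

import Mathlib

private lemma g_sum_le' {d : ℕ} {ι : Type*} (g : (Fin d → ℝ) → ℝ)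
    (hg_add : ∀ x y, g (x + y) ≤ g x + g y)
    (hg0 : g 0 = 0) (t : Finset ι) (f : ι → (Fin d → ℝ)) :
    g (∑ j ∈ t, f j) ≤ ∑ j ∈ t, g (f j) := by
  classical
  induction t using Finset.induction with
  | empty => simp [hg0]
  | insert _ _ hj ih =>
    rw [Finset.sum_insert hj, Finset.sum_insert hj]
    exact le_trans (hg_add _ _) (by linarith)

private lemma bdd_aux {m : ℕ} (Nm : (Fin m → ℝ) → ℝ)
    (hNm_add : ∀ x y, Nm (x + y) ≤ Nm x + Nm y)
    (hNm_smul : ∀ (c : ℝ) (x : Fin m → ℝ), Nm (c • x) = |c| * Nm x)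
    (hNm_def : ∀ x, Nm x = 0 → x = 0)
    (s : Fin m → ℝ) :
    BddAbove {t : ℝ | ∃ ζ : Fin m → ℝ, Nm ζ ≤ 1 ∧ t = ∑ j, s j * ζ j} := by
  classical
  have hNm0 : Nm 0 = 0 := by
    have := hNm_smul 0 0; simpa using this
  have hNm_neg : ∀ x, Nm (-x) = Nm x := by
    intro x; have := hNm_smul (-1) x; simpa using this
  have hNm_nonneg : ∀ x, 0 ≤ Nm x := by
    intro x
    have h1 := hNm_add x (-x)
    rw [add_neg_cancel, hNm0, hNm_neg] at h1
    linarith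
  rcases Nat.eq_zero_or_pos m with hm | hm
  · subst hm
    refine ⟨0, fun t ht => ?_⟩
    obtain ⟨ζ, -, rfl⟩ := ht
    simp
  · haveI : Nonempty (Fin m) := ⟨⟨0, hm⟩⟩
    -- Nm is Lipschitz wrt the sup norm
    set K : ℝ := ∑ j, Nm (Pi.single j 1) with hK
    have hKnonneg : 0 ≤ K := Finset.sum_nonneg fun j _ => hNm_nonneg _
    have hNm_le : ∀ x : Fin m → ℝ, Nm x ≤ K * ‖x‖ := by
      intro x
      have hx : x = ∑ j, Pi.single j (x j) := (Finset.univ_sum_single x).symm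
      calc Nm x = Nm (∑ j, Pi.single j (x j)) := by rw [← hx]
        _ ≤ ∑ j, Nm (Pi.single j (x j)) := by
            -- subadditivity over a finite sum
            have : ∀ (t : Finset (Fin m)) (f : Fin m → (Fin m → ℝ)),
                Nm (∑ j ∈ t, f j) ≤ ∑ j ∈ t, Nm (f j) := by
              intro t f
              induction t using Finset.induction with
              | empty => simp [hNm0]
              | insert _ _ hj ih =>
                rw [Finset.sum_insert hj, Finset.sum_insert hj]
                exact le_trans (hNm_add _ _) (by linarith)
            exact this _ _
        _ = ∑ j, |x j| * Nm (Pi.single j 1) := by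
            refine Finset.sum_congr rfl fun j _ => ?_
            have h : (Pi.single j (x j) : Fin m → ℝ) = x j • (Pi.single j 1 : Fin m → ℝ) := by
              ext i
              by_cases hij : i = j
              · subst hij; simp
              · simp [Pi.single_apply, hij]
            rw [h, hNm_smul]
        _ ≤ ∑ j, ‖x‖ * Nm (Pi.single j 1) := by
            refine Finset.sum_le_sum fun j _ => ?_
            have h1 : |x j| ≤ ‖x‖ := by
              have := norm_le_pi_norm x j
              simpa [Real.norm_eq_abs] using this
            exact mul_le_mul_of_nonneg_right h1 (hNm_nonneg _)
        _ = K * ‖x‖ := by rw [← Finset.mul_sum, mul_comm]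
    have hlip : LipschitzWith (Real.toNNReal K) Nm := by
      refine LipschitzWith.of_dist_le_mul fun x y => ?_
      rw [Real.dist_eq, dist_eq_norm]
      have h1 : Nm x - Nm y ≤ Nm (x - y) := by
        have := hNm_add (x - y) y
        rw [sub_add_cancel] at this
        linarith
      have h2 : Nm y - Nm x ≤ Nm (x - y) := by
        have := hNm_add (y - x) x
        rw [sub_add_cancel] at this
        have heq : Nm (y - x) = Nm (x - y) := by
          rw [← hNm_neg (x - y), neg_sub]
        linarith
      have h3 : |Nm x - Nm y| ≤ Nm (x - y) := abs_sub_le_iff.mpr ⟨h1, h2⟩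
      have h4 : Nm (x - y) ≤ K * ‖x - y‖ := hNm_le _
      have h5 : (Real.toNNReal K : ℝ) = K := Real.coe_toNNReal K hKnonneg
      rw [h5]
      linarith
    obtain ⟨x₀, hx₀, hmin'⟩ := (isCompact_sphere (0 : Fin m → ℝ) 1).exists_isMinOn
      (NormedSpace.sphere_nonempty.mpr zero_le_one) hlip.continuous.continuousOn
    have hmin : ∀ y ∈ Metric.sphere (0 : Fin m → ℝ) 1, Nm x₀ ≤ Nm y :=
      fun y hy => hmin' hy
    have hx₀norm : ‖x₀‖ = 1 := by simpa using mem_sphere_zero_iff_norm.mp hx₀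
    have hx₀ne : x₀ ≠ 0 := by
      intro hx; rw [hx, norm_zero] at hx₀norm; norm_num at hx₀norm
    set c : ℝ := Nm x₀ with hc
    have hcpos : 0 < c := by
      rcases lt_or_eq_of_le (hNm_nonneg x₀) with h | h
      · exact h
      · exact absurd (hNm_def x₀ h.symm) hx₀ne
    -- for any ζ with Nm ζ ≤ 1 we have ‖ζ‖ ≤ 1 / c
    have hball : ∀ ζ : Fin m → ℝ, Nm ζ ≤ 1 → ‖ζ‖ ≤ 1 / c := by
      intro ζ hζ
      by_cases hz : ζ = 0
      · rw [hz, norm_zero]; positivity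
      · have hnpos : 0 < ‖ζ‖ := norm_pos_iff.mpr hz
        have hu : (‖ζ‖⁻¹ • ζ) ∈ Metric.sphere (0 : Fin m → ℝ) 1 := by
          rw [mem_sphere_zero_iff_norm, norm_smul, norm_inv, norm_norm,
            inv_mul_cancel₀ hnpos.ne']
        have h1 : c ≤ Nm (‖ζ‖⁻¹ • ζ) := hmin _ hu
        rw [hNm_smul, abs_of_pos (inv_pos.mpr hnpos)] at h1
        have h2 : c ≤ ‖ζ‖⁻¹ := le_trans h1 (by
          have := mul_le_mul_of_nonneg_left hζ (le_of_lt (inv_pos.mpr hnpos))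
          simpa using this)
        rw [div_eq_mul_inv, one_mul, ← inv_inv ‖ζ‖]
        exact inv_anti₀ hcpos h2
    refine ⟨∑ j, |s j| * (1 / c), fun t ht => ?_⟩
    obtain ⟨ζ, hζ, rfl⟩ := ht
    refine Finset.sum_le_sum fun j _ => ?_
    have h1 : |ζ j| ≤ 1 / c := by
      refine le_trans ?_ (hball ζ hζ)
      have := norm_le_pi_norm ζ j
      simpa [Real.norm_eq_abs] using this
    calc s j * ζ j ≤ |s j * ζ j| := le_abs_self _
      _ = |s j| * |ζ j| := abs_mul _ _
      _ ≤ |s j| * (1 / c) := mul_le_mul_of_nonneg_left h1 (abs_nonneg _)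

/-- Bertsimas and Sim safe approximation for an uncertainty set given by the unit ball
of an absolute norm: if `g σ + ‖s‖_* ≤ 1` where `s j = max (g (Σ j) + b j) (g (-Σ j) - b j)`
and `‖·‖_*` is the dual norm, then the robust constraint
`g (σ + ∑ j ζ j • Σ j) ≤ 1 - ⟨b, ζ⟩` holds for all `ζ` in the unit ball of the norm. -/
theorem bertsimas_sim_approximation {d m : ℕ}
    (g : (Fin d → ℝ) → ℝ)
    (hg_add : ∀ x y, g (x + y) ≤ g x + g y)
    (hg_smul : ∀ t : ℝ, 0 ≤ t → ∀ x, g (t • x) = t * g x)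
    (Nm : (Fin m → ℝ) → ℝ)
    (hNm_add : ∀ x y, Nm (x + y) ≤ Nm x + Nm y)
    (hNm_smul : ∀ (c : ℝ) (x : Fin m → ℝ), Nm (c • x) = |c| * Nm x)
    (hNm_def : ∀ x, Nm x = 0 → x = 0)
    (hNm_abs : ∀ x : Fin m → ℝ, Nm (fun j => |x j|) = Nm x)
    (σ : Fin d → ℝ) (A : Fin m → (Fin d → ℝ)) (b : Fin m → ℝ)
    (s : Fin m → ℝ)
    (hs : ∀ j, s j = max (g (A j) + b j) (g (-A j) - b j))
    (h : g σ + sSup {t : ℝ | ∃ ζ : Fin m → ℝ, Nm ζ ≤ 1 ∧ t = ∑ j, s j * ζ j} ≤ 1) :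
    ∀ ζ : Fin m → ℝ, Nm ζ ≤ 1 →
      g (σ + ∑ j, ζ j • A j) ≤ 1 - ∑ j, b j * ζ j := by
  intro ζ hζ
  have hg0 : g 0 = 0 := by
    have := hg_smul 0 le_rfl 0; simpa using this
  have key : ∀ j, g (ζ j • A j) + b j * ζ j ≤ s j * |ζ j| := by
    intro j
    rcases le_or_gt 0 (ζ j) with hj | hj
    · rw [hg_smul _ hj, abs_of_nonneg hj]
      have hle : g (A j) + b j ≤ s j := (hs j) ▸ le_max_left _ _
      nlinarith
    · have heq : ζ j • A j = (-ζ j) • (-A j) := by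
        rw [smul_neg, neg_smul, neg_neg]
      rw [heq, hg_smul _ (by linarith), abs_of_neg hj]
      have hle : g (-A j) - b j ≤ s j := (hs j) ▸ le_max_right _ _
      nlinarith
  have h1 : g (σ + ∑ j, ζ j • A j) ≤ g σ + ∑ j, g (ζ j • A j) :=
    le_trans (hg_add _ _)
      (add_le_add le_rfl (g_sum_le' g hg_add hg0 _ _))
  have hmem : (∑ j, s j * |ζ j|) ∈
      {t : ℝ | ∃ ζ' : Fin m → ℝ, Nm ζ' ≤ 1 ∧ t = ∑ j, s j * ζ' j} :=
    ⟨fun j => |ζ j|, by rw [hNm_abs]; exact hζ, rfl⟩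
  have h2 : (∑ j, s j * |ζ j|) ≤
      sSup {t : ℝ | ∃ ζ' : Fin m → ℝ, Nm ζ' ≤ 1 ∧ t = ∑ j, s j * ζ' j} :=
    le_csSup (bdd_aux Nm hNm_add hNm_smul hNm_def s) hmem
  have hsum : ∑ j, (g (ζ j • A j) + b j * ζ j) ≤ ∑ j, s j * |ζ j| :=
    Finset.sum_le_sum fun j _ => key j
  rw [Finset.sum_add_distrib] at hsum
  linarith
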